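/- For N = 2 spins the GHZ state is reachable from the product state |++⟩ in finite time by a piecewise-constant global control: working with 4×4 complex matrices indexed by pairs of bits, there exist k ∈ ℕ, times t₁,…,t_k ≥ 0 and field values f₁,…,f_k ∈ ℝ such that (∏_{j=1}^{k} exp(i t_j • (H0 + f_j • H1))).mulVec ψ₀⁺ = ψ_d^(1), where ψ₀⁺ = (e₀₀ + e₀₁ + e₁₀ + e₁₁)/2 and ψ_d^(1) = (e₀₀ + e₁₁)/√2. -/

import Mathlib

open Matrix

/-- `Z n`: the Pauli-Z operator acting on site `n` of the two-spin chain. -/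
noncomputable def Zop (n : Fin 2) : Matrix (Fin 2 → Bool) (Fin 2 → Bool) ℂ :=
  Matrix.diagonal fun s => if s n = false then 1 else -1

/-- `X n`: the Pauli-X (bit flip) operator acting on site `n`. -/
noncomputable def Xop (n : Fin 2) : Matrix (Fin 2 → Bool) (Fin 2 → Bool) ℂ :=
  Matrix.of fun s t => if t = Function.update s n (!(s n)) then 1 else 0

/-- The Ising Hamiltonian for two spins, `H0 = Z₀ Z₁`. -/
noncomputable def IsingH0 : Matrix (Fin 2 → Bool) (Fin 2 → Bool) ℂ := Zop 0 * Zop 1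

/-- The global transverse-field Hamiltonian `H1 = X₀ + X₁`. -/
noncomputable def IsingH1 : Matrix (Fin 2 → Bool) (Fin 2 → Bool) ℂ := Xop 0 + Xop 1

/-- The standard basis vector at the bit string `s`. -/
noncomputable def e (s : Fin 2 → Bool) : (Fin 2 → Bool) → ℂ :=
  Pi.single s 1

/-- The product state `ψ₀⁺ = |++⟩ = (e₀₀ + e₀₁ + e₁₀ + e₁₁)/2`. -/
noncomputable def psiPlus : (Fin 2 → Bool) → ℂ :=
  (2 : ℂ)⁻¹ • ∑ s : Fin 2 → Bool, e s

/-- The GHZ state `ψ_d^(1) = (e₀₀ + e₁₁)/√2`. -/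
noncomputable def ghz1 : (Fin 2 → Bool) → ℂ :=
  ((Real.sqrt 2 : ℂ))⁻¹ • (e (fun _ => false) + e (fun _ => true))

/- ### Auxiliary machinery -/

open NormedSpace

/-- If `w` is an eigenvector of `M` with eigenvalue `μ`, then it is an eigenvector of
`exp ℂ M` with eigenvalue `Complex.exp μ`. -/
lemma exp_mulVec_eigen {m : Type*} [Fintype m] [DecidableEq m]
    (M : Matrix m m ℂ) (w : m → ℂ) (μ : ℂ) (h : M.mulVec w = μ • w) :
    (exp M).mulVec w = Complex.exp μ • w := by
  letI : SeminormedRing (Matrix m m ℂ) := Matrix.linftyOpSemiNormedRing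
  letI : NormedRing (Matrix m m ℂ) := Matrix.linftyOpNormedRing
  letI : NormedAlgebra ℂ (Matrix m m ℂ) := Matrix.linftyOpNormedAlgebra
  have hpow : ∀ k : ℕ, (M ^ k).mulVec w = (μ ^ k) • w := by
    intro k
    induction k with
    | zero => simp [Matrix.one_mulVec]
    | succ k ih =>
        rw [pow_succ, ← Matrix.mulVec_mulVec, h, Matrix.mulVec_smul, ih, smul_comm,
          pow_succ]
        module
  let L : Matrix m m ℂ →ₗ[ℂ] (m → ℂ) :=
    { toFun := fun A => A.mulVec w
      map_add' := fun A B => Matrix.add_mulVec A B w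
      map_smul' := fun c A => Matrix.smul_mulVec c A w }
  have hsum : Summable fun n : ℕ => ((Nat.factorial n : ℂ))⁻¹ • M ^ n := expSeries_summable' M
  rw [exp_eq_tsum (𝕂 := ℂ)]
  have h2 : ∀ n : ℕ, L (((Nat.factorial n : ℂ))⁻¹ • M ^ n) =
      (((Nat.factorial n : ℂ))⁻¹ * μ ^ n) • w := by
    intro n
    simp only [L, LinearMap.coe_mk, AddHom.coe_mk, Matrix.smul_mulVec, hpow, smul_smul]
  calc (∑' n : ℕ, ((Nat.factorial n : ℂ))⁻¹ • M ^ n).mulVec w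
      = L (∑' n : ℕ, ((Nat.factorial n : ℂ))⁻¹ • M ^ n) := rfl
    _ = ∑' n : ℕ, L (((Nat.factorial n : ℂ))⁻¹ • M ^ n) := by
        simpa using (L.toContinuousLinearMap.map_tsum hsum :)
    _ = ∑' n : ℕ, (((Nat.factorial n : ℂ))⁻¹ * μ ^ n) • w := by simp_rw [h2]
    _ = (∑' n : ℕ, ((Nat.factorial n : ℂ))⁻¹ * μ ^ n) • w := by
        rw [Summable.tsum_smul_const]
        simpa using expSeries_summable' (𝕂 := ℂ) μ
    _ = Complex.exp μ • w := by
        rw [Complex.exp_eq_exp_ℂ, exp_eq_tsum (𝕂 := ℂ)]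
        simp [smul_eq_mul]

/-- Abbreviation for bit strings. -/
def bs (a b : Bool) : Fin 2 → Bool := ![a, b]

lemma bs_eta (s : Fin 2 → Bool) : bs (s 0) (s 1) = s := by
  funext i; fin_cases i <;> rfl

lemma ext_bs {g h : (Fin 2 → Bool) → ℂ} (H : ∀ a b, g (bs a b) = h (bs a b)) : g = h := by
  funext s; have := H (s 0) (s 1); rwa [bs_eta] at this

lemma sum_bs (g : (Fin 2 → Bool) → ℂ) :
    ∑ s : Fin 2 → Bool, g s =
      g (bs false false) + g (bs false true) + g (bs true false) + g (bs true true) := by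
  rw [← Equiv.sum_comp (finTwoArrowEquiv Bool).symm g, Fintype.sum_prod_type]
  simp [finTwoArrowEquiv, Fintype.sum_bool, bs]
  ring

noncomputable def s2 : ℂ := (Real.sqrt 2 : ℂ)

lemma s2_sq : s2 * s2 = 2 := by
  rw [s2, ← Complex.ofReal_mul, Real.mul_self_sqrt (by norm_num)]
  norm_num

lemma s2_ne : s2 ≠ 0 := by
  simp only [s2, ne_eq, Complex.ofReal_eq_zero]
  positivity

lemma s2_inv : s2 = 2 * s2⁻¹ := by
  field_simp [s2_ne]
  linear_combination s2_sq

noncomputable def uvec : (Fin 2 → Bool) → ℂ := e (bs false false) + e (bs true true)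
noncomputable def vvec : (Fin 2 → Bool) → ℂ := e (bs false true) + e (bs true false)
noncomputable def wp : (Fin 2 → Bool) → ℂ := uvec + (s2 - 1) • vvec
noncomputable def wm : (Fin 2 → Bool) → ℂ := uvec - (s2 + 1) • vvec

noncomputable def Amat : Matrix (Fin 2 → Bool) (Fin 2 → Bool) ℂ :=
  IsingH0 + ((2:ℂ))⁻¹ • IsingH1

lemma Amat_wp : Amat.mulVec wp = s2 • wp := by
  apply ext_bs; intro a b
  simp only [Amat, IsingH0, IsingH1, Matrix.mulVec, dotProduct, Matrix.add_apply,
    Matrix.smul_apply, Zop, Xop, Matrix.diagonal_mul_diagonal, Matrix.diagonal_apply,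
    Matrix.of_apply, wp, uvec, vvec, e, Pi.add_apply, Pi.smul_apply, Pi.sub_apply,
    Pi.single_apply, smul_eq_mul, sum_bs]
  cases a <;> cases b <;>
    · simp (config := { decide := true }) only [bs, if_true, if_false]
      ring_nf
      try (rw [sq, s2_sq]; ring)
      try (rw [mul_inv_cancel₀ s2_ne]; ring)
      try (rw [s2_inv]; ring_nf; rw [mul_inv_cancel₀ s2_ne]; ring)
      try (field_simp [s2_ne]; linear_combination 2 * Complex.I * s2_sq)

lemma Amat_wm : Amat.mulVec wm = (-s2) • wm := by
  apply ext_bs; intro a b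
  simp only [Amat, IsingH0, IsingH1, Matrix.mulVec, dotProduct, Matrix.add_apply,
    Matrix.smul_apply, Zop, Xop, Matrix.diagonal_mul_diagonal, Matrix.diagonal_apply,
    Matrix.of_apply, wm, uvec, vvec, e, Pi.add_apply, Pi.smul_apply, Pi.sub_apply,
    Pi.single_apply, smul_eq_mul, sum_bs]
  cases a <;> cases b <;>
    · simp (config := { decide := true }) only [bs, if_true, if_false]
      ring_nf
      try (rw [sq, s2_sq]; ring)
      try (rw [mul_inv_cancel₀ s2_ne]; ring)
      try (rw [s2_inv]; ring_nf; rw [mul_inv_cancel₀ s2_ne]; ring)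
      try (field_simp [s2_ne]; linear_combination 2 * Complex.I * s2_sq)

lemma H0_u : IsingH0.mulVec uvec = (1 : ℂ) • uvec := by
  apply ext_bs; intro a b
  simp only [IsingH0, Matrix.mulVec, dotProduct, Zop,
    Matrix.diagonal_mul_diagonal, Matrix.diagonal_apply,
    uvec, e, Pi.add_apply, Pi.smul_apply, Pi.single_apply, smul_eq_mul, sum_bs]
  cases a <;> cases b <;>
    · simp (config := { decide := true }) only [bs, if_true, if_false]
      ring_nf

lemma real_smul_mat (r : ℝ) (M : Matrix (Fin 2 → Bool) (Fin 2 → Bool) ℂ) :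
    r • M = ((r : ℂ)) • M := by
  ext s t
  simp [Matrix.smul_apply, Complex.real_smul]

lemma psiPlus_decomp :
    psiPlus = ((4:ℂ)⁻¹ + (2 * s2)⁻¹) • wp + ((4:ℂ)⁻¹ - (2 * s2)⁻¹) • wm := by
  apply ext_bs; intro a b
  simp only [psiPlus, wp, wm, uvec, vvec, e, Pi.add_apply, Pi.smul_apply, Pi.sub_apply,
    Finset.sum_apply, Pi.single_apply, smul_eq_mul, sum_bs]
  cases a <;> cases b <;>
    · simp (config := { decide := true }) only [bs, if_true, if_false]
      field_simp
      ring_nf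
      try (rw [sq, s2_sq]; ring)
      try (rw [mul_inv_cancel₀ s2_ne]; ring)
      try (rw [s2_inv]; ring_nf; rw [mul_inv_cancel₀ s2_ne]; ring)
      try (field_simp [s2_ne]; linear_combination 2 * Complex.I * s2_sq)

lemma combine_to_u :
    (((4:ℂ)⁻¹ + (2 * s2)⁻¹) * Complex.I) • wp +
      (((4:ℂ)⁻¹ - (2 * s2)⁻¹) * (-Complex.I)) • wm = (Complex.I * s2⁻¹) • uvec := by
  apply ext_bs; intro a b
  simp only [wp, wm, uvec, vvec, e, Pi.add_apply, Pi.smul_apply, Pi.sub_apply,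
    Pi.single_apply, smul_eq_mul]
  cases a <;> cases b <;>
    · simp (config := { decide := true }) only [bs, if_true, if_false]
      field_simp
      ring_nf
      try (rw [sq, s2_sq]; ring)
      try (rw [mul_inv_cancel₀ s2_ne]; ring)
      try (rw [s2_inv]; ring_nf; rw [mul_inv_cancel₀ s2_ne]; ring)
      try (field_simp [s2_ne]; linear_combination 2 * Complex.I * s2_sq)
      try (field_simp [s2_ne]; linear_combination 4 * s2_sq)

lemma ghz1_eq : ghz1 = s2⁻¹ • uvec := by
  have h1 : (fun _ : Fin 2 => false) = bs false false := by
    funext i; fin_cases i <;> rfl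
  have h2 : (fun _ : Fin 2 => true) = bs true true := by
    funext i; fin_cases i <;> rfl
  rw [ghz1, h1, h2]; rfl

lemma exp_I_pi_div_two : Complex.exp (Complex.I * (Real.pi / 2 : ℝ)) = Complex.I := by
  rw [mul_comm, Complex.exp_mul_I, ← Complex.ofReal_cos, ← Complex.ofReal_sin,
    Real.cos_pi_div_two, Real.sin_pi_div_two]
  simp

/- ### Main theorem -/

/-- For `N = 2` spins the GHZ state is reachable from `|++⟩` in finite time by a
piecewise-constant global control: there exist nonnegative times `t_j` and field values
`f_j` such that `(∏_j exp(i t_j (H0 + f_j H1))).mulVec ψ₀⁺ = ψ_d^(1)`. -/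
theorem ghz_reachable_two_spins :
    ∃ (k : ℕ) (t f : Fin k → ℝ), (∀ j, 0 ≤ t j) ∧
      ((List.ofFn fun j : Fin k =>
          NormedSpace.exp
            ((Complex.I * (t j : ℂ)) • (IsingH0 + (f j : ℝ) • IsingH1))).prod).mulVec
        psiPlus = ghz1 := by
  refine ⟨2, ![3 * Real.pi / 2, Real.pi / (2 * Real.sqrt 2)], ![0, 1/2], ?_, ?_⟩
  · intro j; fin_cases j <;> simp <;> positivity
  · have hlist : (List.ofFn fun j : Fin 2 =>
        NormedSpace.exp
          ((Complex.I * ((![3 * Real.pi / 2, Real.pi / (2 * Real.sqrt 2)] : Fin 2 → ℝ) j : ℂ)) •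
            (IsingH0 + ((![0, 1/2] : Fin 2 → ℝ) j : ℝ) • IsingH1))) =
      [NormedSpace.exp ((Complex.I * ((3 * Real.pi / 2 : ℝ) : ℂ)) • IsingH0),
       NormedSpace.exp ((Complex.I * ((Real.pi / (2 * Real.sqrt 2) : ℝ) : ℂ)) •
          (IsingH0 + ((1/2 : ℝ)) • IsingH1))] := by
      simp [List.ofFn_succ]
    rw [hlist]
    simp only [List.prod_cons, List.prod_nil, mul_one]
    rw [← Matrix.mulVec_mulVec]
    set c1 : ℂ := Complex.I * ((Real.pi / (2 * Real.sqrt 2) : ℝ) : ℂ) with hc1def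
    set c0 : ℂ := Complex.I * ((3 * Real.pi / 2 : ℝ) : ℂ) with hc0def
    have hA : IsingH0 + ((1/2 : ℝ)) • IsingH1 = Amat := by
      rw [real_smul_mat, Amat]; norm_num
    have hc1s2 : c1 * s2 = Complex.I * ((Real.pi / 2 : ℝ) : ℂ) := by
      have h : (Real.pi / (2 * Real.sqrt 2)) * Real.sqrt 2 = Real.pi / 2 := by
        have h2 : Real.sqrt 2 ≠ 0 := by positivity
        field_simp
      rw [hc1def, s2, mul_assoc, ← Complex.ofReal_mul, h]
    have hexp_p : Complex.exp (c1 * s2) = Complex.I := by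
      rw [hc1s2]; exact exp_I_pi_div_two
    have hexp_m : Complex.exp (c1 * -s2) = -Complex.I := by
      have h : c1 * -s2 = -(Complex.I * ((Real.pi / 2 : ℝ) : ℂ)) := by
        rw [← hc1s2]; ring
      rw [h, Complex.exp_neg, exp_I_pi_div_two, Complex.inv_I]
    have hwp : (c1 • Amat).mulVec wp = (c1 * s2) • wp := by
      rw [Matrix.smul_mulVec, Amat_wp, smul_smul]
    have hwm : (c1 • Amat).mulVec wm = (c1 * -s2) • wm := by
      rw [Matrix.smul_mulVec, Amat_wm, smul_smul]
    have h1 : (NormedSpace.exp (c1 • Amat)).mulVec psiPlus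
        = (Complex.I * s2⁻¹) • uvec := by
      rw [psiPlus_decomp, Matrix.mulVec_add, Matrix.mulVec_smul, Matrix.mulVec_smul,
        exp_mulVec_eigen _ _ _ hwp, exp_mulVec_eigen _ _ _ hwm, hexp_p, hexp_m,
        smul_smul, smul_smul]
      exact combine_to_u
    have hu : (c0 • IsingH0).mulVec uvec = c0 • uvec := by
      rw [Matrix.smul_mulVec, H0_u, one_smul]
    have hexp0 : Complex.exp c0 = -Complex.I := by
      have h : c0 = (Real.pi : ℂ) * Complex.I + Complex.I * ((Real.pi / 2 : ℝ) : ℂ) := by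
        rw [hc0def]; push_cast; ring
      rw [h, Complex.exp_add, Complex.exp_pi_mul_I, exp_I_pi_div_two]
      ring
    have h2 : (NormedSpace.exp (c0 • IsingH0)).mulVec ((Complex.I * s2⁻¹) • uvec)
        = ghz1 := by
      rw [Matrix.mulVec_smul, exp_mulVec_eigen _ _ _ hu, hexp0, smul_smul, ghz1_eq]
      congr 1
      ring_nf
      rw [Complex.I_sq]
      ring
    rw [hA, h1, h2]
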